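/- Let G = {z ∈ ℂ : Im z > 0, −1/2 ≤ Re z < 1/2, |z| ≥ 1} and let τ ∈ G, with L_τ = {m + k·τ : m, k ∈ ℤ}. There exist g ∈ ℂ and λ ∈ ℂ such that g ∉ L_τ, 3·g ∈ L_τ, and λ·L_τ = L_τ + ℤ·g (i.e. the elliptic curve E = ℂ/L_τ admits a cyclic subgroup C of order 3 with E/C ≅ E) if and only if τ² = −2, or τ² = −3, or τ² = −τ − 1, or τ² = −τ − 3. In particular, there are exactly 4 elliptic curves over ℂ, up to isomorphism, admitting a cyclic subgroup C of order 3 with E/C ≅ E. -/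

import Mathlib

set_option maxHeartbeats 1000000

noncomputable section

/-- The lattice `ℤ + ℤτ` as a subset of `ℂ`. -/
def latt (τ : ℂ) : Set ℂ := {z | ∃ m k : ℤ, z = (m : ℂ) + (k : ℂ) * τ}

/-- The additive subgroup of `ℂ` generated by the lattice `ℤ + ℤτ` and a point `g`. -/
def lattAdj (τ g : ℂ) : Set ℂ := {z | ∃ m k l : ℤ, z = (m : ℂ) + (k : ℂ) * τ + (l : ℂ) * g}

private lemma real_indep {τ : ℂ} (him : τ.im ≠ 0) {r s : ℝ} (h : (r:ℂ) + (s:ℂ) * τ = 0) :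
    r = 0 ∧ s = 0 := by
  have h1 := congrArg Complex.im h
  have h2 := congrArg Complex.re h
  simp [Complex.add_im, Complex.mul_im, Complex.add_re, Complex.mul_re] at h1 h2
  have hs : s = 0 := by
    rcases h1 with h | h
    · exact h
    · exact absurd h him
  refine ⟨?_, hs⟩
  rw [hs] at h2; simpa using h2

lemma int_indep {τ : ℂ} (him : τ.im ≠ 0) {p q : ℤ} (h : (p:ℂ) + (q:ℂ) * τ = 0) :
    p = 0 ∧ q = 0 := by
  have h' : ((p:ℝ):ℂ) + ((q:ℝ):ℂ) * τ = 0 := by push_cast at h ⊢; exact h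
  obtain ⟨h1, h2⟩ := real_indep him h'
  exact ⟨by exact_mod_cast h1, by exact_mod_cast h2⟩

lemma hchar_lem (τ : ℂ) : τ^2 = 2*(τ.re:ℂ)*τ - ((τ.re^2 + τ.im^2 : ℝ) : ℂ) := by
  rw [Complex.ext_iff]
  constructor <;>
    simp [pow_two, Complex.mul_re, Complex.mul_im, Complex.sub_re, Complex.sub_im,
      Complex.ofReal_re, Complex.ofReal_im] <;> ring

lemma div9 (P Q : ℤ) (h : P*Q = 9) (hpos : 0 < P) : P = 1 ∨ P = 3 ∨ P = 9 := by
  have h1 : P ∣ 9 := ⟨Q, h.symm⟩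
  have h2 : P ≤ 9 := Int.le_of_dvd (by norm_num) h1
  interval_cases P <;> omega


lemma arithPos (a b e f : ℤ) (x n : ℝ) (hb : 0 < b)
    (h1 : 2*(b:ℝ)*x = (e:ℝ)) (h2 : (b:ℝ)*n = (f:ℝ)) (h3 : a*a + a*e + b*f = 3)
    (h4 : -(1/2) ≤ x) (h5 : x < 1/2) (h6 : 1 ≤ n) :
    (x = 0 ∧ n = 2) ∨ (x = 0 ∧ n = 3) ∨ (x = -(1/2) ∧ n = 1) ∨ (x = -(1/2) ∧ n = 3) := by
  have h3R : (a:ℝ)*a + a*e + b*f = 3 := by exact_mod_cast h3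
  have hkey : (a:ℝ)^2 + 2*a*b*x + b^2*n = 3 := by
    rw [← h1, ← h2] at h3R; nlinarith [h3R]
  have hbR : (0:ℝ) < b := by exact_mod_cast hb
  have hx2 : x^2 ≤ 1/4 := by nlinarith
  have hnx : (3:ℝ)/4 ≤ n - x^2 := by linarith
  have hmul : (b:ℝ)^2 * (3/4) ≤ (b:ℝ)^2 * (n - x^2) :=
    mul_le_mul_of_nonneg_left hnx (sq_nonneg _)
  have hb2 : (b:ℝ)^2 ≤ 4 := by nlinarith [sq_nonneg ((a:ℝ) + b*x)]
  have hb2' : b ≤ 2 := by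
    have : (b:ℝ) ≤ 2 := by nlinarith [sq_nonneg ((b:ℝ) - 2)]
    exact_mod_cast this
  interval_cases b
  · -- b = 1
    have he1 : (-1:ℝ) ≤ (e:ℝ) := by push_cast at h1; linarith
    have he2 : (e:ℝ) < 1 := by push_cast at h1; linarith
    have he1' : -1 ≤ e := by exact_mod_cast he1
    have he2' : e < 1 := by exact_mod_cast he2
    have hf1 : (1:ℝ) ≤ (f:ℝ) := by push_cast at h2; linarith
    have hf1' : 1 ≤ f := by exact_mod_cast hf1
    have hnf : n = (f:ℝ) := by push_cast at h2; linarith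
    interval_cases e
    · -- e = -1 : x = -1/2
      have hx : x = -(1/2) := by push_cast at h1; linarith
      have ha1 : -1 ≤ a := by nlinarith [h3, hf1']
      have ha2 : a ≤ 2 := by nlinarith [h3, hf1']
      interval_cases a
      · right; right; left
        refine ⟨hx, ?_⟩
        have hf : f = 1 := by omega
        rw [hnf, hf]; norm_num
      · right; right; right
        refine ⟨hx, ?_⟩
        have hf : f = 3 := by omega
        rw [hnf, hf]; norm_num
      · right; right; right
        refine ⟨hx, ?_⟩
        have hf : f = 3 := by omega
        rw [hnf, hf]; norm_num
      · right; right; left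
        refine ⟨hx, ?_⟩
        have hf : f = 1 := by omega
        rw [hnf, hf]; norm_num
    · -- e = 0 : x = 0
      have hx : x = 0 := by push_cast at h1; linarith
      have ha1 : -1 ≤ a := by nlinarith [h3, hf1']
      have ha2 : a ≤ 1 := by nlinarith [h3, hf1']
      interval_cases a
      · left
        refine ⟨hx, ?_⟩
        have hf : f = 2 := by omega
        rw [hnf, hf]; norm_num
      · right; left
        refine ⟨hx, ?_⟩
        have hf : f = 3 := by omega
        rw [hnf, hf]; norm_num
      · left
        refine ⟨hx, ?_⟩
        have hf : f = 2 := by omega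
        rw [hnf, hf]; norm_num
  · -- b = 2
    have he1 : (-2:ℝ) ≤ (e:ℝ) := by push_cast at h1; linarith
    have he2 : (e:ℝ) < 2 := by push_cast at h1; linarith
    have he1' : -2 ≤ e := by exact_mod_cast he1
    have he2' : e < 2 := by exact_mod_cast he2
    have hf1 : (2:ℝ) ≤ (f:ℝ) := by push_cast at h2; linarith
    have hf1' : 2 ≤ f := by exact_mod_cast hf1
    have hn2 : 2*n = (f:ℝ) := by push_cast at h2; linarith
    interval_cases e
    · -- e = -2
      have hx : x = -(1/2) := by push_cast at h1; linarith
      have hsq : (a-1)*(a-1) ≤ 0 := by nlinarith [h3, hf1']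
      have h0 : (a-1)*(a-1) = 0 := le_antisymm hsq (mul_self_nonneg _)
      have ha : a = 1 := by have := mul_self_eq_zero.mp h0; omega
      subst ha
      have hf : f = 2 := by omega
      right; right; left
      refine ⟨hx, ?_⟩
      rw [hf] at hn2; push_cast at hn2; linarith
    · exfalso; nlinarith [h3, hf1', sq_nonneg (2*a-1)]
    · exfalso; nlinarith [h3, hf1', sq_nonneg a]
    · exfalso; nlinarith [h3, hf1', sq_nonneg (2*a+1)]

lemma arith (a b e f : ℤ) (x n : ℝ) (hb : b ≠ 0)
    (h1 : 2*(b:ℝ)*x = (e:ℝ)) (h2 : (b:ℝ)*n = (f:ℝ)) (h3 : a*a + a*e + b*f = 3)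
    (h4 : -(1/2) ≤ x) (h5 : x < 1/2) (h6 : 1 ≤ n) :
    (x = 0 ∧ n = 2) ∨ (x = 0 ∧ n = 3) ∨ (x = -(1/2) ∧ n = 1) ∨ (x = -(1/2) ∧ n = 3) := by
  rcases hb.lt_or_gt with hneg | hpos
  · refine arithPos (-a) (-b) (-e) (-f) x n (by omega) ?_ ?_ (by ring_nf; ring_nf at h3; linarith) h4 h5 h6
    · push_cast; push_cast at h1; linarith
    · push_cast; push_cast at h2; linarith
  · exact arithPos a b e f x n hpos h1 h2 h3 h4 h5 h6


private lemma fwd (τ : ℂ) (him : 0 < τ.im) (hre₁ : -(1 / 2) ≤ τ.re) (hre₂ : τ.re < 1 / 2)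
    (habs : 1 ≤ ‖τ‖)
    (h : ∃ g lam : ℂ, g ∉ latt τ ∧ (3 : ℂ) * g ∈ latt τ ∧
        (fun x => lam * x) '' latt τ = lattAdj τ g) :
    (τ ^ 2 = -2 ∨ τ ^ 2 = -3 ∨ τ ^ 2 = -τ - 1 ∨ τ ^ 2 = -τ - 3) := by
  obtain ⟨g, lam, hg, h3g, H⟩ := h
  have him' : τ.im ≠ 0 := ne_of_gt him
  set x : ℝ := τ.re with hxdef
  set nn : ℝ := x^2 + τ.im^2 with hnndef
  have hchar : τ^2 = 2*(x:ℂ)*τ - ((nn:ℝ):ℂ) := hchar_lem τ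
  have hn1 : (1:ℝ) ≤ nn := by
    have hsq := Complex.sq_norm τ
    rw [Complex.normSq_apply] at hsq
    nlinarith [habs, norm_nonneg τ]
  -- data
  obtain ⟨p, q, hpq⟩ := h3g
  have h1mem : (1:ℂ) ∈ lattAdj τ g := ⟨1, 0, 0, by push_cast; ring⟩
  rw [← H] at h1mem
  obtain ⟨w1, ⟨a, b, rfl⟩, hab⟩ := h1mem
  have hτmem : τ ∈ lattAdj τ g := ⟨0, 1, 0, by push_cast; ring⟩
  rw [← H] at hτmem
  obtain ⟨w2, ⟨c, d, rfl⟩, hcd⟩ := hτmem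
  simp only at hab hcd
  have hlam : lam ≠ 0 := by
    intro h0; rw [h0, zero_mul] at hab; exact one_ne_zero hab.symm
  have hlmem : lam ∈ lattAdj τ g := by
    rw [← H]; exact ⟨1, ⟨1, 0, by push_cast; ring⟩, mul_one lam⟩
  obtain ⟨m1, k1, l1, hl1⟩ := hlmem
  have hltmem : lam * τ ∈ lattAdj τ g := by
    rw [← H]; exact ⟨τ, ⟨0, 1, by push_cast; ring⟩, rfl⟩
  obtain ⟨m2, k2, l2, hl2⟩ := hltmem
  obtain ⟨A, hA⟩ : ∃ A : ℤ, A = 3*m1 + l1*p := ⟨_, rfl⟩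
  obtain ⟨B, hB⟩ : ∃ B : ℤ, B = 3*k1 + l1*q := ⟨_, rfl⟩
  obtain ⟨C, hC⟩ : ∃ C : ℤ, C = 3*m2 + l2*p := ⟨_, rfl⟩
  obtain ⟨D, hD⟩ : ∃ D : ℤ, D = 3*k2 + l2*q := ⟨_, rfl⟩
  have h3lam : (3:ℂ)*lam = (A:ℂ) + (B:ℂ)*τ := by
    rw [hA, hB]; push_cast; linear_combination 3*hl1 + (l1:ℂ)*hpq
  have h3lamt : (3:ℂ)*lam*τ = (C:ℂ) + (D:ℂ)*τ := by
    rw [hC, hD]; push_cast; linear_combination 3*hl2 + (l2:ℂ)*hpq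
  -- relations for μ = a + bτ
  have hmucd : (c:ℂ) + (d:ℂ)*τ = τ*((a:ℂ) + (b:ℂ)*τ) := by
    have h5 : lam * ((c:ℂ) + (d:ℂ)*τ) = lam * (τ*((a:ℂ)+(b:ℂ)*τ)) := by
      rw [hcd]; linear_combination (-τ)*hab
    exact mul_left_cancel₀ hlam h5
  have hE : (((c:ℝ) + (b:ℝ)*nn : ℝ):ℂ) + (((d:ℝ) - (a:ℝ) - 2*(b:ℝ)*x : ℝ):ℂ)*τ = 0 := by
    push_cast; linear_combination hmucd + (b:ℂ)*hchar
  obtain ⟨hE2, hE1⟩ := real_indep him' hE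
  -- relations for μ' = A + Bτ = 3 lam
  have hmu3 : ((A:ℂ) + (B:ℂ)*τ)*((a:ℂ) + (b:ℂ)*τ) = 3 := by
    rw [← h3lam]; linear_combination 3*hab
  have hmut : ((A:ℂ) + (B:ℂ)*τ)*τ = (C:ℂ) + (D:ℂ)*τ := by
    rw [← h3lam, ← h3lamt]
  have hF : (((A:ℝ)*a - B*b*nn - 3 : ℝ):ℂ) + (((A:ℝ)*b + B*a + 2*B*b*x : ℝ):ℂ)*τ = 0 := by
    push_cast; linear_combination hmu3 - (B:ℂ)*(b:ℂ)*hchar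
  obtain ⟨hE3, hE4⟩ := real_indep him' hF
  have hG : ((-(C:ℝ) - B*nn : ℝ):ℂ) + (((A:ℝ) - D + 2*B*x : ℝ):ℂ)*τ = 0 := by
    push_cast; linear_combination hmut - (B:ℂ)*hchar
  obtain ⟨hE2', hE1'⟩ := real_indep him' hG
  -- determinants
  have hPR : ((a*d - b*c : ℤ):ℝ) = (a:ℝ)^2 + 2*a*b*x + b^2*nn := by
    push_cast; linear_combination (a:ℝ)*hE1 - (b:ℝ)*hE2
  have hP'R : ((A*D - B*C : ℤ):ℝ) = (A:ℝ)^2 + 2*A*B*x + B^2*nn := by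
    push_cast; linear_combination (-(A:ℝ))*hE1' + (B:ℝ)*hE2'
  have hPP' : (a*d - b*c) * (A*D - B*C) = 9 := by
    have hR : ((a*d - b*c : ℤ):ℝ) * ((A*D - B*C : ℤ):ℝ) = 9 := by
      rw [hPR, hP'R]
      linear_combination ((a:ℝ)*A - b*B*nn + 3)*hE3 +
        (2*x*((a:ℝ)*A - b*B*nn) + ((a:ℝ)*B + b*A + 2*b*B*x)*nn)*hE4
    exact_mod_cast hR
  have hPpos : 0 < a*d - b*c := by
    have hnonneg : (0:ℝ) ≤ ((a*d - b*c : ℤ):ℝ) := by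
      rw [hPR]
      nlinarith [sq_nonneg ((a:ℝ) + b*x), sq_nonneg ((b:ℝ) * τ.im)]
    have h0 : 0 ≤ a*d - b*c := by exact_mod_cast hnonneg
    rcases h0.lt_or_eq with h' | h'
    · exact h'
    · exfalso; rw [← h'] at hPP'; simp at hPP'
  -- cast versions
  have hE1c : (d:ℂ) - (a:ℂ) - 2*(b:ℂ)*(x:ℂ) = 0 := by exact_mod_cast congrArg Complex.ofReal hE1
  have hE2c : (c:ℂ) + (b:ℂ)*(nn:ℂ) = 0 := by exact_mod_cast congrArg Complex.ofReal hE2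
  have hE1'c : (A:ℂ) - (D:ℂ) + 2*(B:ℂ)*(x:ℂ) = 0 := by exact_mod_cast congrArg Complex.ofReal hE1'
  have hE2'c : -(C:ℂ) - (B:ℂ)*(nn:ℂ) = 0 := by exact_mod_cast congrArg Complex.ofReal hE2'
  rcases div9 _ _ hPP' hPpos with hP | hP | hP
  · -- index 1 : contradiction with g ∉ latt
    exfalso
    have hPc : (a:ℂ)*d - b*c = 1 := by exact_mod_cast hP
    have hprod : ((a:ℂ)+(b:ℂ)*τ)*((d:ℂ) - (b:ℂ)*τ) = 1 := by
      linear_combination (b:ℂ)*τ*hE1c - (b:ℂ)^2*hchar + (b:ℂ)*hE2c + hPc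
    have hlameq : lam = (d:ℂ) - (b:ℂ)*τ := by
      calc lam = lam * (((a:ℂ)+(b:ℂ)*τ)*((d:ℂ)-(b:ℂ)*τ)) := by rw [hprod, mul_one]
        _ = (lam*((a:ℂ)+(b:ℂ)*τ))*((d:ℂ)-(b:ℂ)*τ) := by ring
        _ = (d:ℂ) - (b:ℂ)*τ := by rw [hab, one_mul]
    have hgmem : g ∈ lattAdj τ g := ⟨0, 0, 1, by push_cast; ring⟩
    rw [← H] at hgmem
    obtain ⟨w3, ⟨m, k, rfl⟩, hw⟩ := hgmem
    simp only at hw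
    rw [hlameq] at hw
    apply hg
    refine ⟨d*m - c*k, a*k - b*m, ?_⟩
    push_cast
    linear_combination -hw - (b:ℂ)*k*hchar + (k:ℂ)*hE2c + (k:ℂ)*τ*hE1c
  · -- index 3 : the main case
    rcases eq_or_ne b 0 with hb0 | hb0
    · exfalso
      subst hb0
      push_cast at hE1 hE2
      have hda : d = a := by
        have : (d:ℝ) = a := by linarith
        exact_mod_cast this
      have hc0 : c = 0 := by
        have : (c:ℝ) = 0 := by linarith
        exact_mod_cast this
      rw [hda, hc0] at hP
      simp at hP
      have hle : a ≤ 1 := by nlinarith [hP, sq_nonneg (a-2)]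
      have hge : -1 ≤ a := by nlinarith [hP, sq_nonneg (a+2)]
      interval_cases a <;> omega
    · have h1' : 2*(b:ℝ)*x = ((d - a : ℤ):ℝ) := by push_cast; linarith
      have h2' : (b:ℝ)*nn = ((-c : ℤ):ℝ) := by push_cast; linarith
      have h3' : a*a + a*(d-a) + b*(-c) = 3 := by linear_combination hP
      rcases arith a b (d-a) (-c) x nn hb0 h1' h2' h3' hre₁ hre₂ hn1 with
        ⟨hx, hn⟩ | ⟨hx, hn⟩ | ⟨hx, hn⟩ | ⟨hx, hn⟩
      · left; rw [hchar, hx, hn]; norm_num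
      · right; left; rw [hchar, hx, hn]; norm_num
      · right; right; left; rw [hchar, hx, hn]; push_cast; ring
      · right; right; right; rw [hchar, hx, hn]; push_cast; ring
  · -- index 9 : contradiction
    exfalso
    have hP' : A*D - B*C = 1 := by
      rw [hP] at hPP'; omega
    have hP'c : (A:ℂ)*D - (B:ℂ)*C = 1 := by exact_mod_cast hP'
    have hprod' : ((A:ℂ)+(B:ℂ)*τ)*((D:ℂ)-(B:ℂ)*τ) = 1 := by
      linear_combination -(B:ℂ)^2*hchar - (B:ℂ)*τ*hE1'c + hP'c - (B:ℂ)*hE2'c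
    have hprodτ : ((A:ℂ)+(B:ℂ)*τ)*(-(C:ℂ) + (A:ℂ)*τ) = τ := by
      linear_combination (A:ℂ)*(B:ℂ)*hchar + (A:ℂ)*hE2'c + (A:ℂ)*τ*hE1'c + τ*hP'c
    have hfin1 : lam*((D:ℂ)-(B:ℂ)*τ) = 1/3 := by
      have h9 : (3:ℂ)*lam*((D:ℂ)-(B:ℂ)*τ) = 1 := by rw [h3lam]; exact hprod'
      field_simp
      linear_combination h9
    have hfin2 : lam*(-(C:ℂ)+(A:ℂ)*τ) = τ/3 := by
      have h9 : (3:ℂ)*lam*(-(C:ℂ)+(A:ℂ)*τ) = τ := by rw [h3lam]; exact hprodτ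
      field_simp
      linear_combination h9
    have h13 : (1:ℂ)/3 ∈ lattAdj τ g := by
      rw [← H]
      exact ⟨(D:ℂ)-(B:ℂ)*τ, ⟨D, -B, by push_cast; ring⟩, hfin1⟩
    have hτ3 : τ/3 ∈ lattAdj τ g := by
      rw [← H]
      exact ⟨-(C:ℂ)+(A:ℂ)*τ, ⟨-C, A, by push_cast; ring⟩, hfin2⟩
    obtain ⟨m3, k3, l3, h13'⟩ := h13
    obtain ⟨m4, k4, l4, hτ3'⟩ := hτ3
    have hint1 : ((3*m3 + l3*p - 1 : ℤ):ℂ) + ((3*k3 + l3*q : ℤ):ℂ)*τ = 0 := by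
      push_cast; linear_combination (-3:ℂ)*h13' - (l3:ℂ)*hpq
    have hint2 : ((3*m4 + l4*p : ℤ):ℂ) + ((3*k4 + l4*q - 1 : ℤ):ℂ)*τ = 0 := by
      push_cast; linear_combination (-3:ℂ)*hτ3' - (l4:ℂ)*hpq
    obtain ⟨e1, e2⟩ := int_indep him' hint1
    obtain ⟨e3, e4⟩ := int_indep him' hint2
    have f1 : l3*p = 1 - 3*m3 := by linarith
    have f2 : l3*q = -3*k3 := by linarith
    have f3 : l4*p = -3*m4 := by linarith
    have f4 : l4*q = 1 - 3*k4 := by linarith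
    have key2 : (1 - 3*m3)*(1 - 3*k4) = (-3*k3)*(-3*m4) := by
      rw [← f1, ← f2, ← f3, ← f4]; ring
    have hdvd : (1:ℤ) = 3*(m3 + k4 - 3*m3*k4 + 3*k3*m4) := by linear_combination key2
    omega


private lemma rev (τ : ℂ) (him : 0 < τ.im)
    (h : τ ^ 2 = -2 ∨ τ ^ 2 = -3 ∨ τ ^ 2 = -τ - 1 ∨ τ ^ 2 = -τ - 3) :
    (∃ g lam : ℂ, g ∉ latt τ ∧ (3 : ℂ) * g ∈ latt τ ∧
        (fun x => lam * x) '' latt τ = lattAdj τ g) := by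
  have him' : τ.im ≠ 0 := ne_of_gt him
  rcases h with hτ | hτ | hτ | hτ
  · -- τ² = -2 : g = lam = (1-τ)/3
    refine ⟨(1-τ)/3, (1-τ)/3, ?_, ⟨1, -1, by push_cast; ring⟩, ?_⟩
    · rintro ⟨m, k, hmk⟩
      have h0 : ((3*m-1:ℤ):ℂ) + ((3*k+1:ℤ):ℂ)*τ = 0 := by
        push_cast; linear_combination (-3:ℂ)*hmk
      obtain ⟨h1, h2⟩ := int_indep him' h0
      omega
    · ext z
      constructor
      · rintro ⟨w, ⟨m, k, rfl⟩, rfl⟩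
        exact ⟨k, 0, m-k, by push_cast; linear_combination (-(k:ℂ)/3)*hτ⟩
      · rintro ⟨m, k, l, rfl⟩
        refine ⟨((m+l-2*k:ℤ):ℂ) + ((m+k:ℤ):ℂ)*τ, ⟨m+l-2*k, m+k, rfl⟩, ?_⟩
        push_cast; linear_combination (-((m:ℂ)+k)/3)*hτ
  · -- τ² = -3 : g = lam = τ/3
    refine ⟨τ/3, τ/3, ?_, ⟨0, 1, by push_cast; ring⟩, ?_⟩
    · rintro ⟨m, k, hmk⟩
      have h0 : ((3*m:ℤ):ℂ) + ((3*k-1:ℤ):ℂ)*τ = 0 := by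
        push_cast; linear_combination (-3:ℂ)*hmk
      obtain ⟨h1, h2⟩ := int_indep him' h0
      omega
    · ext z
      constructor
      · rintro ⟨w, ⟨m, k, rfl⟩, rfl⟩
        exact ⟨-k, 0, m, by push_cast; linear_combination ((k:ℂ)/3)*hτ⟩
      · rintro ⟨m, k, l, rfl⟩
        refine ⟨((3*k+l:ℤ):ℂ) + ((-m:ℤ):ℂ)*τ, ⟨3*k+l, -m, rfl⟩, ?_⟩
        push_cast; linear_combination (-(m:ℂ)/3)*hτ
  · -- τ² = -τ-1 : g = (τ+2)/3, lam = -(2τ+1)/3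
    refine ⟨(τ+2)/3, -(2*τ+1)/3, ?_, ⟨2, 1, by push_cast; ring⟩, ?_⟩
    · rintro ⟨m, k, hmk⟩
      have h0 : ((3*m-2:ℤ):ℂ) + ((3*k-1:ℤ):ℂ)*τ = 0 := by
        push_cast; linear_combination (-3:ℂ)*hmk
      obtain ⟨h1, h2⟩ := int_indep him' h0
      omega
    · ext z
      constructor
      · rintro ⟨w, ⟨m, k, rfl⟩, rfl⟩
        exact ⟨m, 0, k-2*m, by push_cast; linear_combination (-2*(k:ℂ)/3)*hτ⟩
      · rintro ⟨m, k, l, rfl⟩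
        refine ⟨((m-2*k:ℤ):ℂ) + ((2*m-k+l:ℤ):ℂ)*τ, ⟨m-2*k, 2*m-k+l, rfl⟩, ?_⟩
        push_cast; linear_combination (-2*((2*(m:ℂ)-k+l))/3)*hτ
  · -- τ² = -τ-3 : g = lam = τ/3
    refine ⟨τ/3, τ/3, ?_, ⟨0, 1, by push_cast; ring⟩, ?_⟩
    · rintro ⟨m, k, hmk⟩
      have h0 : ((3*m:ℤ):ℂ) + ((3*k-1:ℤ):ℂ)*τ = 0 := by
        push_cast; linear_combination (-3:ℂ)*hmk
      obtain ⟨h1, h2⟩ := int_indep him' h0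
      omega
    · ext z
      constructor
      · rintro ⟨w, ⟨m, k, rfl⟩, rfl⟩
        exact ⟨-k, 0, m-k, by push_cast; linear_combination ((k:ℂ)/3)*hτ⟩
      · rintro ⟨m, k, l, rfl⟩
        refine ⟨((3*k+l-m:ℤ):ℂ) + ((-m:ℤ):ℂ)*τ, ⟨3*k+l-m, -m, rfl⟩, ?_⟩
        push_cast; linear_combination (-(m:ℂ)/3)*hτ


theorem stmt_17 (τ : ℂ) (him : 0 < τ.im) (hre₁ : -(1 / 2) ≤ τ.re) (hre₂ : τ.re < 1 / 2)
    (habs : 1 ≤ ‖τ‖) :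
    (∃ g lam : ℂ, g ∉ latt τ ∧ (3 : ℂ) * g ∈ latt τ ∧
        (fun x => lam * x) '' latt τ = lattAdj τ g) ↔
    (τ ^ 2 = -2 ∨ τ ^ 2 = -3 ∨ τ ^ 2 = -τ - 1 ∨ τ ^ 2 = -τ - 3) := by
  exact ⟨fwd τ him hre₁ hre₂ habs, rev τ him⟩
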